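/- Let 𝒜 be an abelian category and 𝒲 a full additive subcategory closed under isomorphisms and under direct summands. Let M ∈ 𝒢(𝒲) and let T →^α W →^γ M be a Tate 𝒲-resolution of M. If H_0(Hom_𝒜(T,M)) = 0 (i.e. Êxt^0_𝒲(M,M) = 0), then M ∈ 𝒲. -/

import Mathlib

universe w v u

open CategoryTheory CategoryTheory.Limits

namespace TateCat

variable (𝒜 : Type u) [Category.{v} 𝒜] [Abelian 𝒜]

abbrev CatCx := ChainComplex 𝒜 ℤ

variable {𝒜}

/-- `Hom(P, T)` is exact at position `n`. -/
def HomIntoExactAt (T : CatCx 𝒜) (P : 𝒜) (n : ℤ) : Prop :=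
  ∀ f : P ⟶ T.X n, f ≫ T.d n (n - 1) = 0 →
    ∃ g : P ⟶ T.X (n + 1), g ≫ T.d (n + 1) n = f

/-- `Hom(T, N)` is exact at position `n`. -/
def HomFromExactAt (T : CatCx 𝒜) (N : 𝒜) (n : ℤ) : Prop :=
  ∀ f : T.X n ⟶ N, T.d (n + 1) n ≫ f = 0 →
    ∃ g : T.X (n - 1) ⟶ N, T.d n (n - 1) ≫ g = f

/-- `T` is a totally `𝒲`-acyclic complex. -/
def IsTotallyAcyclic (𝒲 : 𝒜 → Prop) (T : CatCx 𝒜) : Prop :=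
  (∀ n : ℤ, 𝒲 (T.X n)) ∧ (∀ n : ℤ, T.ExactAt n) ∧
    (∀ W : 𝒜, 𝒲 W → ∀ n : ℤ, HomIntoExactAt T W n ∧ HomFromExactAt T W n)

/-- The class `𝒢(𝒲)`. -/
def GClass (𝒲 : 𝒜 → Prop) : 𝒜 → Prop := fun M =>
  ∃ T : CatCx 𝒜, IsTotallyAcyclic 𝒲 T ∧ Nonempty (cokernel (T.d 1 0) ≅ M)

/-- The dual class: objects arising as `Ker ∂₀` of a totally `𝒱`-acyclic complex. -/
def GCoClass (𝒱 : 𝒜 → Prop) : 𝒜 → Prop := fun M =>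
  ∃ S : CatCx 𝒜, IsTotallyAcyclic 𝒱 S ∧ Nonempty (kernel (S.d 0 (-1)) ≅ M)

/-- `W`, with the augmentation `ε`, is a resolution of `M`. -/
structure IsRes (W : CatCx 𝒜) (M : 𝒜) (ε : W.X 0 ⟶ M) : Prop where
  zero_neg : ∀ n : ℤ, n < 0 → IsZero (W.X n)
  epi : Epi ε
  comp_zero : W.d 1 0 ≫ ε = 0
  exact0 : (ShortComplex.mk (W.d 1 0) ε comp_zero).Exact
  exact : ∀ n : ℤ, 1 ≤ n → W.ExactAt n

/-- `W → M` is a proper `𝒲`-resolution. -/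
def IsProperRes (𝒲 : 𝒜 → Prop) (W : CatCx 𝒜) (M : 𝒜) (ε : W.X 0 ⟶ M) : Prop :=
  IsRes W M ε ∧ (∀ n : ℤ, 0 ≤ n → 𝒲 (W.X n)) ∧
    ∀ P : 𝒜, 𝒲 P →
      (∀ f : P ⟶ M, ∃ g : P ⟶ W.X 0, g ≫ ε = f) ∧
      (∀ f : P ⟶ W.X 0, f ≫ ε = 0 → ∃ g : P ⟶ W.X 1, g ≫ W.d 1 0 = f) ∧
      (∀ n : ℤ, 1 ≤ n → HomIntoExactAt W P n)

/-- A Tate `𝒲`-resolution of `M`. -/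
def IsTateRes (𝒲 : 𝒜 → Prop) (T W : CatCx 𝒜) (M : 𝒜) (ε : W.X 0 ⟶ M)
    (α : T ⟶ W) : Prop :=
  IsTotallyAcyclic 𝒲 T ∧ IsProperRes 𝒲 W M ε ∧
    ∃ N₀ : ℤ, ∀ n : ℤ, N₀ ≤ n → IsIso (α.f n)

def HasTateRes (𝒲 : 𝒜 → Prop) (M : 𝒜) : Prop :=
  ∃ (T W : CatCx 𝒜) (ε : W.X 0 ⟶ M) (α : T ⟶ W), IsTateRes 𝒲 T W M ε α

def HasResLen (𝒳 : 𝒜 → Prop) (M : 𝒜) (m : ℕ) : Prop :=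
  ∃ (W : CatCx 𝒜) (ε : W.X 0 ⟶ M), IsRes W M ε ∧
    (∀ n : ℤ, 0 ≤ n → n ≤ (m : ℤ) → 𝒳 (W.X n)) ∧
    (∀ n : ℤ, (m : ℤ) < n → IsZero (W.X n))

def FinDim (𝒳 : 𝒜 → Prop) (M : 𝒜) : Prop := ∃ m : ℕ, HasResLen 𝒳 M m

/-- `V`, with the augmentation `η`, is a coresolution of `M` (in degrees `≤ 0`). -/
structure IsCores (V : CatCx 𝒜) (M : 𝒜) (η : M ⟶ V.X 0) : Prop where
  zero_pos : ∀ n : ℤ, 0 < n → IsZero (V.X n)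
  mono : Mono η
  comp_zero : η ≫ V.d 0 (-1) = 0
  exact0 : (ShortComplex.mk η (V.d 0 (-1)) comp_zero).Exact
  exact : ∀ n : ℤ, n ≤ -1 → V.ExactAt n

def IsProperCores (𝒱 : 𝒜 → Prop) (V : CatCx 𝒜) (M : 𝒜) (η : M ⟶ V.X 0) : Prop :=
  IsCores V M η ∧ (∀ n : ℤ, n ≤ 0 → 𝒱 (V.X n)) ∧
    ∀ I : 𝒜, 𝒱 I →
      (∀ f : M ⟶ I, ∃ g : V.X 0 ⟶ I, η ≫ g = f) ∧
      (∀ f : V.X 0 ⟶ I, η ≫ f = 0 → ∃ g : V.X (-1) ⟶ I, V.d 0 (-1) ≫ g = f) ∧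
      (∀ n : ℤ, n ≤ -1 → HomFromExactAt V I n)

/-- A Tate `𝒱`-coresolution of `N`. -/
def IsTateCores (𝒱 : 𝒜 → Prop) (V S : CatCx 𝒜) (N : 𝒜) (η : N ⟶ V.X 0)
    (β : V ⟶ S) : Prop :=
  IsProperCores 𝒱 V N η ∧ IsTotallyAcyclic 𝒱 S ∧
    ∃ N₀ : ℤ, ∀ n : ℤ, n ≤ N₀ → IsIso (β.f n)

def HasCoresLen (𝒳 : 𝒜 → Prop) (M : 𝒜) (m : ℕ) : Prop :=
  ∃ (V : CatCx 𝒜) (η : M ⟶ V.X 0), IsCores V M η ∧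
    (∀ n : ℤ, -(m : ℤ) ≤ n → n ≤ 0 → 𝒳 (V.X n)) ∧
    (∀ n : ℤ, n < -(m : ℤ) → IsZero (V.X n))

def FinCodim (𝒳 : 𝒜 → Prop) (M : 𝒜) : Prop := ∃ m : ℕ, HasCoresLen 𝒳 M m

section Ext
variable [HasExt.{w} 𝒜]

/-- `Ext^i(X, Y) = 0` for all `i ≥ 1`. -/
def ExtPerp (X Y : 𝒜) : Prop := ∀ i : ℕ, 1 ≤ i → Subsingleton (Abelian.Ext.{w} X Y i)

end Ext

/-- Lemma 5.1: if `𝒲` is closed under direct summands, `M ∈ 𝒢(𝒲)` and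
`Êxt⁰_𝒲(M, M) = 0` (i.e. `Hom(T, M)` is exact in degree `0` for a Tate `𝒲`-resolution
`T → W → M`), then `M ∈ 𝒲`. -/
theorem mem_W_of_GW_and_tate_self_vanishing
    (𝒜 : Type u) [Category.{v} 𝒜] [Abelian 𝒜]
    (𝒲 : 𝒜 → Prop)
    (h_iso : ∀ A B : 𝒜, 𝒲 A → Nonempty (A ≅ B) → 𝒲 B)
    (h_zero : ∀ A : 𝒜, IsZero A → 𝒲 A)
    (h_biprod : ∀ A B : 𝒜, 𝒲 A → 𝒲 B → 𝒲 (A ⊞ B))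
    (h_summand : ∀ (W A B : 𝒜), 𝒲 W → Nonempty (W ≅ A ⊞ B) → 𝒲 A)
    (M : 𝒜) (hM : GClass 𝒲 M)
    (T W : CatCx 𝒜) (ε : W.X 0 ⟶ M) (α : T ⟶ W)
    (h : IsTateRes 𝒲 T W M ε α)
    (hvanish : HomFromExactAt T M 0) :
    𝒲 M := by
  classical
  obtain ⟨S, hS, ⟨c⟩⟩ := hM
  obtain ⟨hSW, hSex, hShom⟩ := hS
  obtain ⟨hTT, hPR, N₀, hα⟩ := h
  obtain ⟨hRes, hWX, hLift⟩ := hPR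
  have hTW : ∀ n : ℤ, 𝒲 (T.X n) := hTT.1
  have hWd : W.d 1 0 ≫ ε = 0 := hRes.comp_zero
  -- the projection π : S.X 0 ⟶ M and inclusion j : M ⟶ S.X (-1)
  obtain ⟨π, j, hπepi, hd1π, hπj⟩ : ∃ (π : S.X 0 ⟶ M) (j : M ⟶ S.X (-1)),
      Epi π ∧ (S.d 1 0 ≫ π = 0) ∧ (π ≫ j = S.d 0 (-1)) := by
    refine ⟨cokernel.π _ ≫ c.hom,
      c.inv ≫ cokernel.desc _ (S.d 0 (-1)) (S.d_comp_d 1 0 (-1)), epi_comp _ _, ?_, ?_⟩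
    · simp [cokernel.condition_assoc]
    · simp
  haveI := hπepi
  obtain ⟨Nn, hNn⟩ : ∃ k : ℕ, N₀ ≤ (k : ℤ) ∧ 1 ≤ (k : ℤ) := ⟨max N₀.toNat 1, by omega, by omega⟩
  haveI hiso1 : IsIso (α.f (Nn : ℤ)) := hα _ (by omega)
  haveI hiso2 : IsIso (α.f ((Nn : ℤ)+1)) := hα _ (by omega)
  -- Step 1 : the comparison map Λ : S (degrees ≥ 0) → W lifting π
  obtain ⟨Λ, hΛ0, hΛ⟩ : ∃ Λ : ∀ n : ℤ, (S.X n ⟶ W.X n), Λ 0 ≫ ε = π ∧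
      ∀ n : ℤ, 0 ≤ n → n ≤ (Nn : ℤ) → Λ (n+1) ≫ W.d (n+1) n = S.d (n+1) n ≫ Λ n := by
    have key : ∀ k : ℕ, ∃ Λ : ∀ n : ℤ, (S.X n ⟶ W.X n), Λ 0 ≫ ε = π ∧
        ∀ n : ℤ, 0 ≤ n → n < (k : ℤ) → Λ (n+1) ≫ W.d (n+1) n = S.d (n+1) n ≫ Λ n := by
      intro k
      induction k with
      | zero =>
        obtain ⟨l0, hl0⟩ := (hLift (S.X 0) (hSW 0)).1 π
        exact ⟨Function.update (fun n => 0) 0 l0, by simp [hl0], fun n h1 h2 => by omega⟩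
      | succ k ih =>
        obtain ⟨Λ, hΛ0, hΛ⟩ := ih
        have hnew : ∃ g : S.X ((k:ℤ)+1) ⟶ W.X ((k:ℤ)+1),
            g ≫ W.d ((k:ℤ)+1) k = S.d ((k:ℤ)+1) k ≫ Λ k := by
          rcases Nat.eq_zero_or_pos k with rfl | hk
          · push_cast
            refine (hLift (S.X (0+1)) (hSW _)).2.1 (S.d (0+1) 0 ≫ Λ 0) ?_
            rw [Category.assoc, hΛ0]
            exact hd1π
          · refine (hLift (S.X ((k:ℤ)+1)) (hSW _)).2.2 (k:ℤ) (by exact_mod_cast hk)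
              (S.d ((k:ℤ)+1) k ≫ Λ k) ?_
            have h2 := hΛ ((k:ℤ)-1) (by omega) (by omega)
            rw [show (k:ℤ)-1+1 = (k:ℤ) by ring] at h2
            rw [Category.assoc, h2, ← Category.assoc, HomologicalComplex.d_comp_d, zero_comp]
        obtain ⟨g, hg⟩ := hnew
        refine ⟨Function.update Λ ((k:ℤ)+1) g, ?_, ?_⟩
        · rw [Function.update_of_ne (by omega : (0:ℤ) ≠ (k:ℤ)+1)]; exact hΛ0
        · intro n h1 h2
          rcases lt_or_ge n (k:ℤ) with hn | hn
          · rw [Function.update_of_ne (by omega : n+1 ≠ (k:ℤ)+1),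
              Function.update_of_ne (by omega : n ≠ (k:ℤ)+1)]
            exact hΛ n h1 hn
          · obtain rfl : n = (k:ℤ) := by push_cast at h2; omega
            rw [Function.update_self, Function.update_of_ne (by omega : (k:ℤ) ≠ (k:ℤ)+1)]
            exact hg
    obtain ⟨Λ, h0, hrel⟩ := key (Nn+1)
    exact ⟨Λ, h0, fun n h1 h2 => hrel n h1 (by push_cast; omega)⟩
  -- Step 2 : the comparison map μ : S → T, descending from degree Nn
  obtain ⟨μ, hμN, hμN1, hμ⟩ : ∃ μ : ∀ n : ℤ, (S.X n ⟶ T.X n),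
      μ (Nn:ℤ) = Λ (Nn:ℤ) ≫ inv (α.f (Nn:ℤ)) ∧
      μ ((Nn:ℤ)+1) = Λ ((Nn:ℤ)+1) ≫ inv (α.f ((Nn:ℤ)+1)) ∧
      ∀ n : ℤ, (-1:ℤ) ≤ n → n ≤ (Nn:ℤ) →
        S.d (n+1) n ≫ μ n = μ (n+1) ≫ T.d (n+1) n := by
    have key : ∀ k : ℕ, ∃ μ : ∀ n : ℤ, (S.X n ⟶ T.X n),
        μ (Nn:ℤ) = Λ (Nn:ℤ) ≫ inv (α.f (Nn:ℤ)) ∧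
        μ ((Nn:ℤ)+1) = Λ ((Nn:ℤ)+1) ≫ inv (α.f ((Nn:ℤ)+1)) ∧
        ∀ n : ℤ, (Nn:ℤ) - (k:ℤ) ≤ n → n ≤ (Nn:ℤ) →
          S.d (n+1) n ≫ μ n = μ (n+1) ≫ T.d (n+1) n := by
      intro k
      induction k with
      | zero =>
        refine ⟨Function.update
            (Function.update (fun n => 0) ((Nn:ℤ)) (Λ (Nn:ℤ) ≫ inv (α.f (Nn:ℤ))))
            ((Nn:ℤ)+1) (Λ ((Nn:ℤ)+1) ≫ inv (α.f ((Nn:ℤ)+1))), ?_, ?_, ?_⟩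
        · rw [Function.update_of_ne (by omega : (Nn:ℤ) ≠ (Nn:ℤ)+1), Function.update_self]
        · rw [Function.update_self]
        · intro n h1 h2
          obtain rfl : n = (Nn:ℤ) := by push_cast at h1; omega
          rw [Function.update_self,
            Function.update_of_ne (by omega : (Nn:ℤ) ≠ (Nn:ℤ)+1), Function.update_self]
          rw [← cancel_mono (α.f (Nn:ℤ))]
          simp only [Category.assoc, IsIso.inv_hom_id, Category.comp_id]
          rw [← HomologicalComplex.Hom.comm α ((Nn:ℤ)+1) (Nn:ℤ), IsIso.inv_hom_id_assoc]
          exact (hΛ (Nn:ℤ) (by omega) le_rfl).symm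
      | succ k ih =>
        obtain ⟨μ, hμN, hμN1, hμ⟩ := ih
        set p : ℤ := (Nn:ℤ) - (k:ℤ) - 1 with hpdef
        have hcyc : S.d (p+1+1) (p+1) ≫ (μ (p+1) ≫ T.d (p+1) p) = 0 := by
          rw [← Category.assoc, hμ (p+1) (by omega) (by omega), Category.assoc,
            HomologicalComplex.d_comp_d, comp_zero]
        obtain ⟨g, hg⟩ := (hShom (T.X p) (hTW p) (p+1)).2 (μ (p+1) ≫ T.d (p+1) p) hcyc
        refine ⟨Function.update μ p ((S.XIsoOfEq (show p = p+1-1 by ring)).hom ≫ g),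
          ?_, ?_, ?_⟩
        · rw [Function.update_of_ne (by omega : (Nn:ℤ) ≠ p)]; exact hμN
        · rw [Function.update_of_ne (by omega : (Nn:ℤ)+1 ≠ p)]; exact hμN1
        · intro n h1 h2
          rcases lt_or_ge n ((Nn:ℤ) - (k:ℤ)) with hn | hn
          · obtain rfl : n = p := by push_cast at h1; omega
            rw [Function.update_self, Function.update_of_ne (by omega : p+1 ≠ p)]
            have : S.d (p+1) p ≫ (S.XIsoOfEq (show p = p+1-1 by ring)).hom
                = S.d (p+1) (p+1-1) := by
              have aux : ∀ (i x y : ℤ) (e : x = y),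
                  S.d i x ≫ (S.XIsoOfEq e).hom = S.d i y := by
                intro i x y e; subst e; simp
              exact aux _ _ _ _
            rw [← Category.assoc, this, hg]
          · rw [Function.update_of_ne (by omega : n ≠ p),
              Function.update_of_ne (by omega : n+1 ≠ p)]
            exact hμ n (by omega) h2
    obtain ⟨μ, h1, h2, h3⟩ := key (Nn+1)
    exact ⟨μ, h1, h2, fun n hn1 hn2 => h3 n (by push_cast; omega) hn2⟩
  -- ρ n = Λ n - μ n ≫ α.f n  is a chain map in degrees [0, Nn], zero at Nn, Nn+1
  have hρN : Λ (Nn:ℤ) - μ (Nn:ℤ) ≫ α.f (Nn:ℤ) = 0 := by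
    rw [hμN]; simp
  have hρN1 : Λ ((Nn:ℤ)+1) - μ ((Nn:ℤ)+1) ≫ α.f ((Nn:ℤ)+1) = 0 := by
    rw [hμN1]; simp
  have hρ : ∀ n : ℤ, 0 ≤ n → n ≤ (Nn:ℤ) →
      S.d (n+1) n ≫ (Λ n - μ n ≫ α.f n)
        = (Λ (n+1) - μ (n+1) ≫ α.f (n+1)) ≫ W.d (n+1) n := by
    intro n h1 h2
    rw [Preadditive.comp_sub, Preadditive.sub_comp, hΛ n h1 h2, Category.assoc,
      HomologicalComplex.Hom.comm α (n+1) n, ← Category.assoc,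
      hμ n (by omega) h2, Category.assoc]
  -- Step 3 : the homotopy κ, descending from degree Nn
  obtain ⟨κ, hκ⟩ : ∃ κ : ∀ n : ℤ, (S.X n ⟶ W.X (n+1)),
      ∀ n : ℤ, (-1:ℤ) ≤ n → n ≤ (Nn:ℤ) →
        S.d (n+1) n ≫ κ n
          = (Λ (n+1) - μ (n+1) ≫ α.f (n+1)) - κ (n+1) ≫ W.d (n+1+1) (n+1) := by
    have key : ∀ k : ℕ, (k:ℤ) ≤ (Nn:ℤ)+1 → ∃ κ : ∀ n : ℤ, (S.X n ⟶ W.X (n+1)),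
        ∀ n : ℤ, (Nn:ℤ) - (k:ℤ) ≤ n → n ≤ (Nn:ℤ) →
          S.d (n+1) n ≫ κ n
            = (Λ (n+1) - μ (n+1) ≫ α.f (n+1)) - κ (n+1) ≫ W.d (n+1+1) (n+1) := by
      intro k
      induction k with
      | zero =>
        intro _
        refine ⟨fun n => 0, fun n h1 h2 => ?_⟩
        obtain rfl : n = (Nn:ℤ) := by push_cast at h1; omega
        simp [hρN1]
      | succ k ih =>
        intro hk
        obtain ⟨κ, hκ⟩ := ih (by push_cast at hk ⊢; omega)
        set p : ℤ := (Nn:ℤ) - (k:ℤ) - 1 with hpdef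
        have hcyc : S.d (p+1+1) (p+1) ≫
            ((Λ (p+1) - μ (p+1) ≫ α.f (p+1)) - κ (p+1) ≫ W.d (p+1+1) (p+1)) = 0 := by
          rw [Preadditive.comp_sub, hρ (p+1) (by push_cast at hk ⊢; omega) (by omega),
            ← Category.assoc, hκ (p+1) (by omega) (by omega)]
          simp [Preadditive.sub_comp, Category.assoc]
        obtain ⟨g, hg⟩ := (hShom (W.X (p+1)) (hWX (p+1) (by push_cast at hk ⊢; omega))
          (p+1)).2 _ hcyc
        refine ⟨Function.update κ p ((S.XIsoOfEq (show p = p+1-1 by ring)).hom ≫ g),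
          fun n h1 h2 => ?_⟩
        rcases lt_or_ge n ((Nn:ℤ) - (k:ℤ)) with hn | hn
        · obtain rfl : n = p := by push_cast at h1; omega
          rw [Function.update_self, Function.update_of_ne (by omega : p+1 ≠ p)]
          have aux : ∀ (i x y : ℤ) (e : x = y),
              S.d i x ≫ (S.XIsoOfEq e).hom = S.d i y := by
            intro i x y e; subst e; simp
          rw [← Category.assoc, aux _ _ _ _, hg]
        · rw [Function.update_of_ne (by omega : n ≠ p),
            Function.update_of_ne (by omega : n+1 ≠ p)]
          exact hκ n (by omega) h2
    obtain ⟨κ, hκ⟩ := key (Nn+1) (by push_cast; omega)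
    exact ⟨κ, fun n h1 h2 => hκ n (by push_cast; omega) h2⟩
  -- Step 4 : hvanish gives g with T.d 0 (-1) ≫ g = α.f 0 ≫ ε
  have hcyc0 : T.d (0+1) 0 ≫ (α.f 0 ≫ ε) = 0 := by
    rw [← Category.assoc, ← HomologicalComplex.Hom.comm α (0+1) 0, Category.assoc]
    have : W.d (0+1) 0 ≫ ε = 0 := hWd
    rw [this, comp_zero]
  obtain ⟨g, hg⟩ := hvanish (α.f 0 ≫ ε) hcyc0
  have hg' : T.d 0 (-1) ≫ g = α.f 0 ≫ ε := hg
  -- Step 5 : assemble the retraction r : S.X (-1) ⟶ M with S.d 0 (-1) ≫ r = π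
  have hμm1 : S.d 0 (-1) ≫ μ (-1) = μ 0 ≫ T.d 0 (-1) := hμ (-1) le_rfl (by omega)
  have hκm1 : S.d 0 (-1) ≫ κ (-1)
      = (Λ 0 - μ 0 ≫ α.f 0) - κ 0 ≫ W.d 1 0 := hκ (-1) le_rfl (by omega)
  have hfact : S.d 0 (-1) ≫ (κ (-1) ≫ ε + μ (-1) ≫ g) = π := by
    have e1 : S.d 0 (-1) ≫ κ (-1) ≫ ε = ((Λ 0 - μ 0 ≫ α.f 0) - κ 0 ≫ W.d 1 0) ≫ ε := by
      rw [← Category.assoc, hκm1]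
    have e2 : S.d 0 (-1) ≫ μ (-1) ≫ g = μ 0 ≫ α.f 0 ≫ ε := by
      rw [← Category.assoc, hμm1, Category.assoc, hg']
    rw [Preadditive.comp_add, e1, e2, Preadditive.sub_comp, Preadditive.sub_comp,
      Category.assoc, Category.assoc, hWd, comp_zero, sub_zero, hΛ0]
    abel
  have hjr : j ≫ (κ (-1) ≫ ε + μ (-1) ≫ g) = 𝟙 M := by
    rw [← cancel_epi π, ← Category.assoc, hπj, hfact, Category.comp_id]
  -- Step 6 : M is a direct summand of S.X (-1) ∈ 𝒲
  set r : S.X (-1) ⟶ M := κ (-1) ≫ ε + μ (-1) ≫ g with hrdef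
  have hju : j ≫ (𝟙 (S.X (-1)) - r ≫ j) = 0 := by
    rw [Preadditive.comp_sub, Category.comp_id, ← Category.assoc, hjr, Category.id_comp,
      sub_self]
  set u : cokernel j ⟶ S.X (-1) := cokernel.desc j (𝟙 (S.X (-1)) - r ≫ j) hju with hudef
  have hur : u ≫ r = 0 := by
    rw [← cancel_epi (cokernel.π j), hudef, cokernel.π_desc_assoc, comp_zero,
      Preadditive.sub_comp, Category.id_comp, Category.assoc, hjr, Category.comp_id,
      sub_self]
  have huπ : u ≫ cokernel.π j = 𝟙 (cokernel j) := by
    rw [← cancel_epi (cokernel.π j), hudef, cokernel.π_desc_assoc, Category.comp_id,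
      Preadditive.sub_comp, Category.id_comp, Category.assoc, cokernel.condition,
      comp_zero, sub_zero]
  refine h_summand (S.X (-1)) M (cokernel j) (hSW (-1)) ⟨?_⟩
  refine ⟨biprod.lift r (cokernel.π j), biprod.desc j u, ?_, ?_⟩
  · rw [biprod.lift_desc, hudef, cokernel.π_desc]
    abel
  · apply biprod.hom_ext'
    · apply biprod.hom_ext <;> simp [hjr, cokernel.condition]
    · apply biprod.hom_ext <;> simp [hur, huπ]

end TateCat
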